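/- Let p be a prime and Q a finite nonabelian p-group such that Z(Q) = [Q,Q] and this common subgroup is elementary abelian. Assume |Z(Q)| = p² and |Q/Z(Q)| = p³ (so |Q| = p⁵). Then Q has exactly one abelian subgroup of order p⁴, i.e., exactly one abelian subgroup of index p. -/

import Mathlib

open Subgroup
open scoped commutatorElement
open scoped IsMulCommutative

section CommCalc
variable {G : Type*} [Group G]

lemma aux_comm_mul_right (hc : ∀ x y : G, ⁅x, y⁆ ∈ Subgroup.center G) (a b c : G) :
    ⁅a, b * c⁆ = ⁅a, b⁆ * ⁅a, c⁆ := by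
  have hz : ∀ g : G, g * ⁅a, c⁆ = ⁅a, c⁆ * g := fun g =>
    (Subgroup.mem_center_iff.mp (hc a c) g)
  have : ⁅a, b⁆ * ⁅a, c⁆ = a * b * a⁻¹ * (b⁻¹ * ⁅a, c⁆) := by
    simp [commutatorElement_def, mul_assoc]
  rw [this, hz b⁻¹]
  simp [commutatorElement_def]
  group

lemma aux_comm_mul_left (hc : ∀ x y : G, ⁅x, y⁆ ∈ Subgroup.center G) (a b c : G) :
    ⁅a * b, c⁆ = ⁅a, c⁆ * ⁅b, c⁆ :=
  calc ⁅a * b, c⁆ = ⁅c, a * b⁆⁻¹ := (commutatorElement_inv c (a*b)).symm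
    _ = (⁅c, a⁆ * ⁅c, b⁆)⁻¹ := by rw [aux_comm_mul_right hc c a b]
    _ = ⁅c, b⁆⁻¹ * ⁅c, a⁆⁻¹ := mul_inv_rev _ _
    _ = ⁅b, c⁆ * ⁅a, c⁆ := by rw [commutatorElement_inv, commutatorElement_inv]
    _ = ⁅a, c⁆ * ⁅b, c⁆ := Subgroup.mem_center_iff.mp (hc a c) _

lemma aux_comm_pow_right (hc : ∀ x y : G, ⁅x, y⁆ ∈ Subgroup.center G) (a b : G) :
    ∀ n : ℕ, ⁅a, b ^ n⁆ = ⁅a, b⁆ ^ n := by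
  intro n
  induction n with
  | zero => simp
  | succ n ih => rw [pow_succ, aux_comm_mul_right hc, ih, pow_succ]

lemma aux_comm_inv_right (hc : ∀ x y : G, ⁅x, y⁆ ∈ Subgroup.center G) (a b : G) :
    ⁅a, b⁻¹⁆ = ⁅a, b⁆⁻¹ := by
  have h := aux_comm_mul_right hc a b b⁻¹
  rw [mul_inv_cancel] at h
  simp only [commutatorElement_one_right] at h
  exact (inv_eq_of_mul_eq_one_right h.symm).symm

lemma aux_comm_zpow_right (hc : ∀ x y : G, ⁅x, y⁆ ∈ Subgroup.center G) (a b : G) :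
    ∀ n : ℤ, ⁅a, b ^ n⁆ = ⁅a, b⁆ ^ n := by
  intro n
  rcases n with m | m
  · simpa using aux_comm_pow_right hc a b m
  · rw [Int.negSucc_eq, zpow_neg, ← inv_zpow]
    have h1 : ((m : ℤ) + 1) = ((m + 1 : ℕ) : ℤ) := by push_cast; ring
    rw [h1, zpow_neg, zpow_natCast, aux_comm_pow_right hc a b⁻¹,
      aux_comm_inv_right hc, inv_pow, zpow_natCast]

lemma aux_comm_zpow_left (hc : ∀ x y : G, ⁅x, y⁆ ∈ Subgroup.center G) (a b : G) (n : ℤ) :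
    ⁅a ^ n, b⁆ = ⁅a, b⁆ ^ n := by
  calc ⁅a ^ n, b⁆ = ⁅b, a ^ n⁆⁻¹ := (commutatorElement_inv b _).symm
    _ = (⁅b, a⁆ ^ n)⁻¹ := by rw [aux_comm_zpow_right hc b a]
    _ = (⁅b, a⁆⁻¹) ^ n := by rw [inv_zpow]
    _ = ⁅a, b⁆ ^ n := by rw [commutatorElement_inv]

end CommCalc

section PowMod
variable {G : Type*} [Group G]

lemma aux_zpow_mod {p : ℕ} (x : G) (hx : x ^ p = 1) {m n : ℤ} (h : m ≡ n [ZMOD p]) :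
    x ^ m = x ^ n := by
  have hd : orderOf x ∣ p := orderOf_dvd_of_pow_eq_one hx
  have : m ≡ n [ZMOD (orderOf x)] := h.of_dvd (Int.natCast_dvd_natCast.mpr hd)
  exact zpow_eq_zpow_iff_modEq.mpr this

/-- divide powers: if gcd(n,p)=1 and g^n ∈ S, g^p ∈ S then g ∈ S -/
lemma aux_div_pow {p : ℕ} (hp : p.Prime) (S : Subgroup G) (g : G)
    (hgp : g ^ (p : ℤ) ∈ S) {n : ℤ} (hn : ¬ (p : ℤ) ∣ n) (h : g ^ n ∈ S) : g ∈ S := by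
  have hcop : IsCoprime n (p : ℤ) :=
    ((Nat.prime_iff_prime_int.mp hp).coprime_iff_not_dvd.mpr hn).symm
  obtain ⟨u, v, huv⟩ := hcop
  have : g = (g ^ n) ^ u * (g ^ (p : ℤ)) ^ v := by
    rw [← zpow_mul, ← zpow_mul, ← zpow_add, mul_comm n u, mul_comm (p:ℤ) v, huv, zpow_one]
  rw [this]
  exact S.mul_mem (S.zpow_mem h u) (S.zpow_mem hgp v)

end PowMod

section CommGroupAux
variable {H : Type*} [CommGroup H]

lemma aux_rel (x y z : H) (a a' b b' c c' : ℤ)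
    (h : x ^ a * y ^ b * z ^ c = x ^ a' * y ^ b' * z ^ c') :
    x ^ (a - a') * y ^ (b - b') * z ^ (c - c') = 1 := by
  have h2 : (x ^ a * y ^ b * z ^ c) / (x ^ a' * y ^ b' * z ^ c') = 1 := div_eq_one.mpr h
  rw [← h2]
  simp only [div_eq_mul_inv, zpow_sub, mul_inv_rev]
  ac_rfl

lemma aux_norm {p : ℕ} (x y z : H) (hx : x ^ p = 1) (i j k u : ℤ)
    (hiu : i * u ≡ 1 [ZMOD p]) (h : x ^ i * y ^ j * z ^ k = 1) :
    x * y ^ (j * u) * z ^ (k * u) = 1 := by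
  have h2 : (x ^ i * y ^ j * z ^ k) ^ u = 1 := by rw [h, one_zpow]
  rw [mul_zpow, mul_zpow, ← zpow_mul, ← zpow_mul, ← zpow_mul] at h2
  rwa [show x ^ (i * u) = x from (aux_zpow_mod x hx hiu).trans (zpow_one x)] at h2

end CommGroupAux

section Downstairs
variable {H : Type*} [Group H]

lemma aux_mem_pair (hcomm : ∀ x y : H, x * y = y * x) {a b g : H}
    (hg : g ∈ Subgroup.closure {a, b}) : ∃ i j : ℤ, a ^ i * b ^ j = g := by
  induction hg using Subgroup.closure_induction with
  | mem x hx =>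
    rcases hx with rfl | rfl
    · exact ⟨1, 0, by simp⟩
    · exact ⟨0, 1, by simp⟩
  | one => exact ⟨0, 0, by simp⟩
  | mul x y _ _ hx hy =>
    obtain ⟨i, j, rfl⟩ := hx
    obtain ⟨k, l, rfl⟩ := hy
    refine ⟨i + k, j + l, ?_⟩
    have hab : Commute b a := (hcomm b a)
    calc a ^ (i + k) * b ^ (j + l) = a ^ i * a ^ k * (b ^ j * b ^ l) := by
          rw [zpow_add, zpow_add]
      _ = a ^ i * b ^ j * (a ^ k * b ^ l) := by
          have hjk := (hab.zpow_zpow j k).eq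
          simp only [mul_assoc]
          congr 1
          rw [← mul_assoc, ← hjk, mul_assoc]
  | inv x _ hx =>
    obtain ⟨i, j, rfl⟩ := hx
    refine ⟨-i, -j, ?_⟩
    rw [mul_inv_rev, zpow_neg, zpow_neg, hcomm]

lemma aux_card_pair_le {p : ℕ} (hp : p.Prime) (hcomm : ∀ x y : H, x * y = y * x)
    (hexp : ∀ x : H, x ^ p = 1) (a b : H) :
    Nat.card (Subgroup.closure {a, b} : Subgroup H) ≤ p ^ 2 := by
  have hsurj : Function.Surjective
      (fun ij : Fin p × Fin p => (⟨a ^ (ij.1 : ℕ) * b ^ (ij.2 : ℕ),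
        Subgroup.mul_mem _ (Subgroup.pow_mem _ (Subgroup.subset_closure (by simp)) _)
          (Subgroup.pow_mem _ (Subgroup.subset_closure (by simp)) _)⟩ :
        (Subgroup.closure {a, b} : Subgroup H))) := by
    rintro ⟨g, hg⟩
    obtain ⟨i, j, rfl⟩ := aux_mem_pair hcomm hg
    have hp0 : 0 < (p : ℤ) := by exact_mod_cast hp.pos
    have hi1 : 0 ≤ i % p := Int.emod_nonneg i (by positivity)
    have hi2 : i % p < p := Int.emod_lt_of_pos i hp0
    have hj1 : 0 ≤ j % p := Int.emod_nonneg j (by positivity)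
    have hj2 : j % p < p := Int.emod_lt_of_pos j hp0
    refine ⟨⟨⟨(i % p).toNat, by omega⟩, ⟨(j % p).toNat, by omega⟩⟩, ?_⟩
    apply Subtype.ext
    show a ^ ((i % (p:ℤ)).toNat) * b ^ ((j % (p:ℤ)).toNat) = a ^ i * b ^ j
    have hia : a ^ ((i % (p:ℤ)).toNat) = a ^ i := by
      rw [← zpow_natCast, Int.toNat_of_nonneg hi1]
      exact aux_zpow_mod a (hexp a) (Int.emod_emod_of_dvd i dvd_rfl)
    have hjb : b ^ ((j % (p:ℤ)).toNat) = b ^ j := by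
      rw [← zpow_natCast, Int.toNat_of_nonneg hj1]
      exact aux_zpow_mod b (hexp b) (Int.emod_emod_of_dvd j dvd_rfl)
    rw [hia, hjb]
  calc Nat.card (Subgroup.closure {a, b} : Subgroup H)
      ≤ Nat.card (Fin p × Fin p) := Nat.card_le_card_of_surjective _ hsurj
    _ = p ^ 2 := by simp [Nat.card_eq_fintype_card, sq]

end Downstairs

section Indep
variable {H : Type*} [Group H] {p : ℕ}

lemma aux_pow_in (hp : p.Prime) (hexp : ∀ x : H, x ^ p = 1) (S : Subgroup H) (g : H)
    {n : ℤ} (hn : ¬ (p : ℤ) ∣ n) (h : g ^ n ∈ S) : g ∈ S :=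
  aux_div_pow hp S g (by rw [zpow_natCast, hexp g]; exact S.one_mem) hn h

lemma aux_zpow_triv (hexp : ∀ x : H, x ^ p = 1) (g : H) {n : ℤ} (hn : (p : ℤ) ∣ n) :
    g ^ n = 1 := by
  obtain ⟨m, rfl⟩ := hn
  rw [zpow_mul, zpow_natCast, hexp g, one_zpow]

lemma aux_perm (hp : p.Prime) (hcomm : ∀ x y : H, x * y = y * x)
    (hexp : ∀ x : H, x ^ p = 1) {v1 v2 v3 : H} (h1 : v1 ≠ 1)
    (h2 : v2 ∉ Subgroup.closure {v1}) (h3 : v3 ∉ Subgroup.closure {v1, v2}) :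
    v3 ∉ Subgroup.closure {v1} ∧ v2 ∉ Subgroup.closure {v1, v3} ∧ v2 ≠ 1 ∧
      v3 ∉ Subgroup.closure {v2} ∧ v1 ∉ Subgroup.closure {v2, v3} := by
  have hmono1 : Subgroup.closure {v1} ≤ Subgroup.closure {v1, v2} :=
    Subgroup.closure_mono (by simp)
  have hmono2 : Subgroup.closure {v2} ≤ Subgroup.closure {v1, v2} :=
    Subgroup.closure_mono (by simp)
  have hv1mem : v1 ∈ Subgroup.closure ({v1, v2} : Set H) :=
    Subgroup.subset_closure (by simp)
  have hv2mem : v2 ∈ Subgroup.closure ({v1, v2} : Set H) :=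
    Subgroup.subset_closure (by simp)
  refine ⟨fun h => h3 (hmono1 h), ?_, ?_, fun h => h3 (hmono2 h), ?_⟩
  · intro h
    obtain ⟨i, j, hij⟩ := aux_mem_pair hcomm h
    by_cases hpj : (p : ℤ) ∣ j
    · rw [aux_zpow_triv hexp v3 hpj, mul_one] at hij
      apply h2
      rw [← hij]
      exact Subgroup.zpow_mem _ (Subgroup.subset_closure (Set.mem_singleton v1)) i
    · have : v3 ^ j ∈ Subgroup.closure ({v1, v2} : Set H) := by
        have : v3 ^ j = v1 ^ (-i) * v2 := by
          rw [← hij]; rw [zpow_neg]; group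
        rw [this]
        exact Subgroup.mul_mem _ (Subgroup.zpow_mem _ hv1mem _) hv2mem
      exact h3 (aux_pow_in hp hexp _ _ hpj this)
  · intro h; exact h2 (h ▸ Subgroup.one_mem _)
  · intro h
    obtain ⟨i, j, hij⟩ := aux_mem_pair hcomm h
    by_cases hpj : (p : ℤ) ∣ j
    · rw [aux_zpow_triv hexp v3 hpj, mul_one] at hij
      by_cases hpi : (p : ℤ) ∣ i
      · rw [aux_zpow_triv hexp v2 hpi] at hij
        exact h1 hij.symm
      · have : v2 ^ i ∈ Subgroup.closure ({v1} : Set H) :=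
          hij ▸ Subgroup.subset_closure (Set.mem_singleton _)
        exact h2 (aux_pow_in hp hexp _ _ hpi this)
    · have : v3 ^ j ∈ Subgroup.closure ({v1, v2} : Set H) := by
        have he : v3 ^ j = v2 ^ (-i) * v1 := by rw [← hij, zpow_neg]; group
        rw [he]
        exact Subgroup.mul_mem _ (Subgroup.zpow_mem _ hv2mem _) hv1mem
      exact h3 (aux_pow_in hp hexp _ _ hpj this)

end Indep

section CardPair
variable {H : Type*} [Group H]

lemma aux_eq_of_le_of_card_le {A B : Subgroup H} [Finite H] (h : A ≤ B)
    (hc : Nat.card B ≤ Nat.card A) : A = B := by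
  apply SetLike.coe_injective
  apply Set.eq_of_subset_of_ncard_le h _ (Set.toFinite _)
  rwa [← Nat.card_coe_set_eq, ← Nat.card_coe_set_eq]

lemma aux_card_singleton {p : ℕ} (hp : p.Prime) (hexp : ∀ x : H, x ^ p = 1)
    {v : H} (hv : v ≠ 1) : Nat.card (Subgroup.closure {v} : Subgroup H) = p := by
  rw [← Subgroup.zpowers_eq_closure, Nat.card_zpowers]
  rcases (Nat.dvd_prime hp).mp (orderOf_dvd_of_pow_eq_one (hexp v)) with h | h
  · exact absurd (orderOf_eq_one_iff.mp h) hv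
  · exact h

lemma aux_card_pair_eq {p : ℕ} (hp : p.Prime) [Finite H]
    (hcomm : ∀ x y : H, x * y = y * x) (hexp : ∀ x : H, x ^ p = 1)
    {v w : H} (hv : v ≠ 1) (hw : w ∉ Subgroup.closure {v})
    (hcard : Nat.card H = p ^ 3) (hnt : Subgroup.closure {v, w} ≠ ⊤) :
    Nat.card (Subgroup.closure {v, w} : Subgroup H) = p ^ 2 := by
  set U : Subgroup H := Subgroup.closure {v, w} with hU
  have hdvd : Nat.card U ∣ p ^ 3 := hcard ▸ Subgroup.card_subgroup_dvd_card U
  obtain ⟨m, hm3, hm⟩ := (Nat.dvd_prime_pow hp).mp hdvd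
  have hle : Subgroup.closure {v} ≤ U := Subgroup.closure_mono (by simp)
  have hpd : p ∣ Nat.card U := by
    rw [← aux_card_singleton hp hexp hv]
    exact Subgroup.card_dvd_of_le hle
  have hm1 : 1 ≤ m := by
    by_contra hc
    interval_cases m
    · rw [hm, pow_zero] at hpd
      exact hp.one_lt.ne' (Nat.dvd_one.mp hpd)
  have hm2 : m ≠ 1 := by
    intro rfl_m
    subst rfl_m
    rw [pow_one] at hm
    have : Subgroup.closure {v} = U :=
      aux_eq_of_le_of_card_le hle (by rw [hm, aux_card_singleton hp hexp hv])
    exact hw (this ▸ Subgroup.subset_closure (by simp))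
  have hm3' : m ≠ 3 := by
    intro rfl_m
    subst rfl_m
    exact hnt (Subgroup.eq_top_of_card_eq U (by rw [hm, hcard]))
  rw [hm]
  congr 1
  omega

lemma aux_closure_comm {s : Set H} (hs : ∀ a ∈ s, ∀ b ∈ s, a * b = b * a) :
    ∀ a ∈ Subgroup.closure s, ∀ b ∈ Subgroup.closure s, a * b = b * a := by
  intro a ha b hb
  change Commute a b
  refine Subgroup.closure_induction₂ (p := fun x y _ _ => Commute x y)
    (fun x y hx hy => hs x hx y hy)
    (fun x _ => Commute.one_left x) (fun x _ => Commute.one_right x)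
    (fun x y z _ _ _ h1 h2 => h1.mul_left h2)
    (fun y z x _ _ _ h1 h2 => h1.mul_right h2)
    (fun x y _ _ h => h.inv_left) (fun x y _ _ h => h.inv_right) ha hb

end CardPair

section KeyAux
variable {G : Type*} [Group G] {p : ℕ}

lemma aux_key (hc : ∀ x y : G, ⁅x, y⁆ ∈ Subgroup.center G) (f1 f2 f3 : G) (b c : ℤ)
    (hrel : ⁅f1, f2⁆ * ⁅f1, f3⁆ ^ b * ⁅f2, f3⁆ ^ c = 1) :
    ⁅f1 * f3 ^ (-c), f2 * f3 ^ b⁆ = 1 := by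
  rw [aux_comm_mul_left hc, aux_comm_mul_right hc, aux_comm_mul_right hc,
    aux_comm_zpow_right hc, aux_comm_zpow_left hc, aux_comm_zpow_left hc,
    aux_comm_zpow_right hc, commutatorElement_self, one_zpow, one_zpow, mul_one,
    ← commutatorElement_inv f2 f3, inv_zpow, ← zpow_neg, neg_neg]
  exact hrel

lemma aux_inv (hp : p.Prime) {i : ℤ} (h : ¬ (p : ℤ) ∣ i) : ∃ u : ℤ, i * u ≡ 1 [ZMOD p] := by
  have hcop : IsCoprime i (p : ℤ) :=
    ((Nat.prime_iff_prime_int.mp hp).coprime_iff_not_dvd.mpr h).symm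
  obtain ⟨u, v, huv⟩ := hcop
  exact ⟨u, (Int.modEq_iff_dvd.mpr ⟨v, by linarith⟩)⟩

lemma aux_exists_notin [Finite G] {S : Subgroup G} (h : Nat.card S < Nat.card G) :
    ∃ g : G, g ∉ S := by
  by_contra hcon
  push_neg at hcon
  have hS : S = ⊤ := (Subgroup.eq_top_iff' S).mpr hcon
  rw [hS, Subgroup.card_top] at h
  exact lt_irrefl _ h

lemma aux_xy (hp : p.Prime) (hcomm : ∀ x y : G, x * y = y * x)
    (hexp : ∀ x : G, x ^ p = 1) {v1 v2 v3 : G} (h1 : v1 ≠ 1)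
    (h2 : v2 ∉ Subgroup.closure {v1}) (h3 : v3 ∉ Subgroup.closure {v1, v2}) (e b : ℤ) :
    v1 * v3 ^ e ≠ 1 ∧ v2 * v3 ^ b ∉ Subgroup.closure {v1 * v3 ^ e} := by
  have hv1mem : v1 ∈ Subgroup.closure ({v1, v2} : Set G) :=
    Subgroup.subset_closure (by simp)
  have hv2mem : v2 ∈ Subgroup.closure ({v1, v2} : Set G) :=
    Subgroup.subset_closure (by simp)
  constructor
  · intro h
    by_cases hpe : (p : ℤ) ∣ e
    · rw [aux_zpow_triv hexp v3 hpe, mul_one] at h; exact h1 h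
    · apply h3
      apply aux_pow_in hp hexp _ _ hpe (h := ?_)
      rw [eq_inv_of_mul_eq_one_right h]
      exact Subgroup.inv_mem _ hv1mem
  · intro h
    rw [Subgroup.mem_closure_singleton] at h
    obtain ⟨k, hk⟩ := h
    have hcom : Commute v1 (v3 ^ e) := hcomm _ _
    rw [hcom.mul_zpow, ← zpow_mul] at hk
    have hv2 : v2 = v1 ^ k * v3 ^ (e * k - b) := by
      symm
      rw [zpow_sub, ← mul_assoc, hk, mul_assoc, mul_inv_cancel, mul_one]
    by_cases hpd : (p : ℤ) ∣ (e * k - b)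
    · apply h2
      rw [hv2, aux_zpow_triv hexp v3 hpd, mul_one]
      exact Subgroup.zpow_mem _ (Subgroup.subset_closure (Set.mem_singleton _)) k
    · apply h3
      apply aux_pow_in hp hexp _ _ hpd (h := ?_)
      have : v3 ^ (e * k - b) = v1 ^ (-k) * v2 := by
        rw [hv2]; group
      rw [this]
      exact Subgroup.mul_mem _ (Subgroup.zpow_mem _ hv1mem _) hv2mem

end KeyAux


set_option maxHeartbeats 1000000

/-- Let `p` be a prime and `Q` a finite nonabelian `p`-group with
`Z(Q) = [Q,Q]` elementary abelian, `|Z(Q)| = p²` and `|Q/Z(Q)| = p³` (so `|Q| = p⁵`).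
Then `Q` has exactly one abelian subgroup of order `p⁴`, i.e. of index `p`. -/
theorem stmt_2 (p : ℕ) (hp : p.Prime) (Q : Type*) [Group Q] [Finite Q]
    (hpq : IsPGroup p Q)
    (hnab : ¬ ∀ a b : Q, a * b = b * a)
    (hZcomm : Subgroup.center Q = commutator Q)
    (helem : ∀ x ∈ Subgroup.center Q, x ^ p = 1)
    (hZcard : Nat.card (Subgroup.center Q) = p ^ 2)
    (hQZcard : Nat.card (Q ⧸ Subgroup.center Q) = p ^ 3) :
    ∃! A : Subgroup Q, (∀ a ∈ A, ∀ b ∈ A, a * b = b * a) ∧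
      Nat.card A = p ^ 4 ∧ A.index = p := by
  classical
  have hp2 : 2 ≤ p := hp.two_le
  -- commutators are central
  have hc : ∀ a b : Q, ⁅a, b⁆ ∈ Subgroup.center Q := fun a b => by
    rw [hZcomm, commutator_def]
    exact Subgroup.commutator_mem_commutator (Subgroup.mem_top a) (Subgroup.mem_top b)
  have hcp : ∀ a b : Q, ⁅a, b⁆ ^ p = 1 := fun a b => helem _ (hc a b)
  have hpowc : ∀ a : Q, a ^ p ∈ Subgroup.center Q := by
    intro a
    rw [Subgroup.mem_center_iff]
    intro g
    have h1 : ⁅a ^ p, g⁆ = 1 := by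
      rw [← zpow_natCast a p, aux_comm_zpow_left hc, zpow_natCast, hcp a g]
    exact ((commutatorElement_eq_one_iff_commute.mp h1).symm).eq
  -- quotient
  set π := QuotientGroup.mk' (Subgroup.center Q) with hπ
  have hπs : Function.Surjective π := QuotientGroup.mk'_surjective _
  have hcommb : ∀ x y : Q ⧸ Subgroup.center Q, x * y = y * x := by
    intro x y
    obtain ⟨a, rfl⟩ := hπs x
    obtain ⟨b, rfl⟩ := hπs y
    rw [← map_mul, ← map_mul]
    refine (QuotientGroup.mk'_eq_mk' (N := Subgroup.center Q)).mpr ⟨(a * b)⁻¹ * (b * a), ?_, by group⟩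
    have heq : (a * b)⁻¹ * (b * a) = ⁅b⁻¹, a⁻¹⁆ := by
      simp [commutatorElement_def]; group
    rw [heq]
    exact hc _ _
  have hexpb : ∀ x : Q ⧸ Subgroup.center Q, x ^ p = 1 := by
    intro x
    obtain ⟨a, rfl⟩ := hπs x
    rw [← map_pow, ← MonoidHom.mem_ker, QuotientGroup.ker_mk']
    exact hpowc a
  -- cardinalities
  have hZindex : (Subgroup.center Q).index = p ^ 3 := by
    rw [Subgroup.index_eq_card]; exact hQZcard
  have hcardQ : Nat.card Q = p ^ 5 := by
    have h := Subgroup.card_mul_index (Subgroup.center Q)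
    rw [hZcard, hZindex] at h
    rw [← h]; ring
  -- independent triple downstairs
  obtain ⟨a0, ha0⟩ : ∃ a : Q, a ∉ Subgroup.center Q := by
    by_contra hcc
    push_neg at hcc
    exact hnab fun a b => Subgroup.mem_center_iff.mp (hcc b) a
  set v1 := π a0 with hv1def
  have hv1 : v1 ≠ 1 := by
    intro h
    apply ha0
    rw [← QuotientGroup.ker_mk' (Subgroup.center Q), MonoidHom.mem_ker]
    exact h
  obtain ⟨v2, hv2⟩ := aux_exists_notin (S := Subgroup.closure {v1}) (by
    rw [aux_card_singleton hp hexpb hv1, hQZcard]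
    calc p = p ^ 1 := (pow_one p).symm
      _ < p ^ 3 := Nat.pow_lt_pow_right hp.one_lt (by norm_num))
  obtain ⟨v3, hv3⟩ := aux_exists_notin (S := Subgroup.closure {v1, v2}) (by
    refine lt_of_le_of_lt (aux_card_pair_le hp hcommb hexpb v1 v2) ?_
    rw [hQZcard]
    exact Nat.pow_lt_pow_right hp.one_lt (by norm_num))
  obtain ⟨e1, he1⟩ := hπs v1
  obtain ⟨e2, he2⟩ := hπs v2
  obtain ⟨e3, he3⟩ := hπs v3
  -- pigeonhole on commutators
  set C12 : ↥(Subgroup.center Q) := ⟨⁅e1, e2⁆, hc e1 e2⟩ with hC12def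
  set C13 : ↥(Subgroup.center Q) := ⟨⁅e1, e3⁆, hc e1 e3⟩ with hC13def
  set C23 : ↥(Subgroup.center Q) := ⟨⁅e2, e3⁆, hc e2 e3⟩ with hC23def
  have hC12p : C12 ^ p = 1 := Subtype.ext (by
    rw [SubmonoidClass.coe_pow]; exact hcp e1 e2)
  have hC13p : C13 ^ p = 1 := Subtype.ext (by
    rw [SubmonoidClass.coe_pow]; exact hcp e1 e3)
  have hC23p : C23 ^ p = 1 := Subtype.ext (by
    rw [SubmonoidClass.coe_pow]; exact hcp e2 e3)
  letI : Fintype ↥(Subgroup.center Q) := Fintype.ofFinite _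
  have hcard_lt : Fintype.card ↥(Subgroup.center Q) <
      Fintype.card (Fin p × Fin p × Fin p) := by
    rw [← Nat.card_eq_fintype_card, hZcard]
    simp only [Fintype.card_prod, Fintype.card_fin]
    calc p ^ 2 < p ^ 3 := Nat.pow_lt_pow_right hp.one_lt (by norm_num)
      _ = p * (p * p) := by ring
  obtain ⟨t, t', htne, hteq⟩ := Fintype.exists_ne_map_eq_of_card_lt
    (fun t : Fin p × Fin p × Fin p =>
      C12 ^ (t.1 : ℕ) * C13 ^ (t.2.1 : ℕ) * C23 ^ (t.2.2 : ℕ)) hcard_lt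
  set i : ℤ := ((t.1 : ℕ) : ℤ) - ((t'.1 : ℕ) : ℤ) with hidef
  set j : ℤ := ((t.2.1 : ℕ) : ℤ) - ((t'.2.1 : ℕ) : ℤ) with hjdef
  set k : ℤ := ((t.2.2 : ℕ) : ℤ) - ((t'.2.2 : ℕ) : ℤ) with hkdef
  have hrel0 : C12 ^ i * C13 ^ j * C23 ^ k = 1 := by
    apply aux_rel
    show C12 ^ ((t.1 : ℕ) : ℤ) * C13 ^ ((t.2.1 : ℕ) : ℤ) * C23 ^ ((t.2.2 : ℕ) : ℤ) =
      C12 ^ ((t'.1 : ℕ) : ℤ) * C13 ^ ((t'.2.1 : ℕ) : ℤ) * C23 ^ ((t'.2.2 : ℕ) : ℤ)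
    simpa [zpow_natCast] using hteq
  have hnd : ∀ a a' : Fin p, a ≠ a' → ¬ (p : ℤ) ∣ (((a : ℕ) : ℤ) - ((a' : ℕ) : ℤ)) := by
    intro a a' hane hdvd
    have hb1 : (a : ℕ) < p := a.2
    have hb2 : (a' : ℕ) < p := a'.2
    have h0 : ((a : ℕ) : ℤ) - ((a' : ℕ) : ℤ) = 0 :=
      Int.eq_zero_of_abs_lt_dvd hdvd (abs_lt.mpr (by omega))
    exact hane (Fin.ext (by omega))
  have hne_comp : t.1 ≠ t'.1 ∨ t.2.1 ≠ t'.2.1 ∨ t.2.2 ≠ t'.2.2 := by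
    by_contra hcc
    push_neg at hcc
    exact htne (Prod.ext hcc.1 (Prod.ext hcc.2.1 hcc.2.2))
  obtain ⟨hp31, hp213, hv2ne, hp32, hp123⟩ := aux_perm hp hcommb hexpb hv1 hv2 hv3
  have hπmul : ∀ (a b : Q) (n : ℤ), π (a * b ^ n) = π a * (π b) ^ n := by
    intro a b n; rw [map_mul, map_zpow]
  have hexists : ∃ x y : Q, ⁅x, y⁆ = 1 ∧ π x ≠ 1 ∧ π y ∉ Subgroup.closure {π x} := by
    rcases hne_comp with hno | hno | hno
    · obtain ⟨u, hu⟩ := aux_inv hp (hnd _ _ hno)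
      have hn := aux_norm C12 C13 C23 hC12p i j k u hu hrel0
      have hrelQ : ⁅e1, e2⁆ * ⁅e1, e3⁆ ^ (j * u) * ⁅e2, e3⁆ ^ (k * u) = 1 := by
        have hcoe := congrArg Subtype.val hn
        simpa using hcoe
      refine ⟨e1 * e3 ^ (-(k * u)), e2 * e3 ^ (j * u),
        aux_key hc e1 e2 e3 (j * u) (k * u) hrelQ, ?_, ?_⟩
      · rw [hπmul, he1, he3]
        exact (aux_xy hp hcommb hexpb hv1 hv2 hv3 (-(k * u)) (j * u)).1
      · rw [hπmul, hπmul, he1, he2, he3]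
        exact (aux_xy hp hcommb hexpb hv1 hv2 hv3 (-(k * u)) (j * u)).2
    · obtain ⟨u, hu⟩ := aux_inv hp (hnd _ _ hno)
      have hrel0' : C13 ^ j * C12 ^ i * C23 ^ k = 1 := by
        rw [← hrel0, mul_comm (C13 ^ j) (C12 ^ i)]
      have hn := aux_norm C13 C12 C23 hC13p j i k u hu hrel0'
      have hrelQ : ⁅e1, e3⁆ * ⁅e1, e2⁆ ^ (i * u) * ⁅e3, e2⁆ ^ (-(k * u)) = 1 := by
        have h0 : ⁅e3, e2⁆ ^ (-(k * u)) = ⁅e2, e3⁆ ^ (k * u) := by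
          rw [← commutatorElement_inv e2 e3, inv_zpow, ← zpow_neg, neg_neg]
        rw [h0]
        have hcoe := congrArg Subtype.val hn
        simpa using hcoe
      refine ⟨e1 * e2 ^ (-(-(k * u))), e3 * e2 ^ (i * u),
        aux_key hc e1 e3 e2 (i * u) (-(k * u)) hrelQ, ?_, ?_⟩
      · rw [hπmul, he1, he2]
        exact (aux_xy hp hcommb hexpb hv1 hp31 hp213 (-(-(k * u))) (i * u)).1
      · rw [hπmul, hπmul, he1, he2, he3]
        exact (aux_xy hp hcommb hexpb hv1 hp31 hp213 (-(-(k * u))) (i * u)).2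
    · obtain ⟨u, hu⟩ := aux_inv hp (hnd _ _ hno)
      have hrel0' : C23 ^ k * C12 ^ i * C13 ^ j = 1 := (mul_rotate (C23 ^ k) (C12 ^ i) (C13 ^ j)).trans hrel0
      have hn := aux_norm C23 C12 C13 hC23p k i j u hu hrel0'
      have hrelQ : ⁅e2, e3⁆ * ⁅e2, e1⁆ ^ (-(i * u)) * ⁅e3, e1⁆ ^ (-(j * u)) = 1 := by
        have h0 : ⁅e2, e1⁆ ^ (-(i * u)) = ⁅e1, e2⁆ ^ (i * u) := by
          rw [← commutatorElement_inv e1 e2, inv_zpow, ← zpow_neg, neg_neg]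
        have h1 : ⁅e3, e1⁆ ^ (-(j * u)) = ⁅e1, e3⁆ ^ (j * u) := by
          rw [← commutatorElement_inv e1 e3, inv_zpow, ← zpow_neg, neg_neg]
        rw [h0, h1]
        have hcoe := congrArg Subtype.val hn
        simpa using hcoe
      refine ⟨e2 * e1 ^ (-(-(j * u))), e3 * e1 ^ (-(i * u)),
        aux_key hc e2 e3 e1 (-(i * u)) (-(j * u)) hrelQ, ?_, ?_⟩
      · rw [hπmul, he1, he2]
        exact (aux_xy hp hcommb hexpb hv2ne hp32 hp123 (-(-(j * u))) (-(i * u))).1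
      · rw [hπmul, hπmul, he1, he2, he3]
        exact (aux_xy hp hcommb hexpb hv2ne hp32 hp123 (-(-(j * u))) (-(i * u))).2
  obtain ⟨x, y, hxy, hx1, hyx⟩ := hexists
  set U : Subgroup (Q ⧸ Subgroup.center Q) := Subgroup.closure {π x, π y} with hUdef
  set A : Subgroup Q := U.comap π with hAdef
  have hAeq : A = Subgroup.closure ({x, y} ∪ (Subgroup.center Q : Set Q)) := by
    rw [hAdef, hUdef]
    have h1 : ({π x, π y} : Set (Q ⧸ Subgroup.center Q)) = π '' {x, y} :=
      (Set.image_pair π x y).symm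
    rw [h1, ← MonoidHom.map_closure, Subgroup.comap_map_eq, QuotientGroup.ker_mk',
      Subgroup.closure_union, Subgroup.closure_eq]
  have habA : ∀ a ∈ A, ∀ b ∈ A, a * b = b * a := by
    rw [hAeq]
    apply aux_closure_comm
    have hcxy : Commute x y := commutatorElement_eq_one_iff_commute.mp hxy
    rintro a (ha | ha) b (hb | hb)
    · simp only [Set.mem_insert_iff, Set.mem_singleton_iff] at ha hb
      rcases ha with rfl | rfl <;> rcases hb with rfl | rfl
      exacts [rfl, hcxy.eq, (hcxy.symm).eq, rfl]
    · exact Subgroup.mem_center_iff.mp hb a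
    · exact (Subgroup.mem_center_iff.mp ha b).symm
    · exact Subgroup.mem_center_iff.mp hb a
  have hUtop : U ≠ ⊤ := by
    intro htop
    apply hnab
    intro a b
    have ha : a ∈ A := by
      rw [hAdef]
      exact Subgroup.mem_comap.mpr (htop ▸ Subgroup.mem_top (π a))
    have hb : b ∈ A := by
      rw [hAdef]
      exact Subgroup.mem_comap.mpr (htop ▸ Subgroup.mem_top (π b))
    exact habA a ha b hb
  have hUcard : Nat.card U = p ^ 2 :=
    aux_card_pair_eq hp hcommb hexpb hx1 hyx hQZcard hUtop
  have hUindex : U.index = p := by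
    have h := Subgroup.card_mul_index U
    rw [hUcard, hQZcard] at h
    have h3 : p ^ 3 = p ^ 2 * p := by ring
    rw [h3] at h
    exact Nat.eq_of_mul_eq_mul_left (pow_pos hp.pos 2) h
  have hAindex : A.index = p := by
    have h := Subgroup.index_comap_of_surjective (H := U) hπs
    rw [hAdef, h]
    exact hUindex
  have hAcard : Nat.card A = p ^ 4 := by
    have h := Subgroup.card_mul_index A
    rw [hAindex, hcardQ] at h
    have h5 : p ^ 5 = p ^ 4 * p := by ring
    rw [h5] at h
    exact Nat.eq_of_mul_eq_mul_right hp.pos h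
  refine ⟨A, ⟨habA, hAcard, hAindex⟩, ?_⟩
  rintro B ⟨hBab, hBcard, hBindex⟩
  by_contra hne
  have hnotle : ¬ B ≤ A := fun hle =>
    hne (aux_eq_of_le_of_card_le hle (by rw [hAcard, hBcard]))
  have hStop : A ⊔ B = ⊤ := by
    have hdvd : (A ⊔ B).index ∣ p := hAindex ▸ Subgroup.index_dvd_of_le le_sup_left
    rcases (Nat.dvd_prime hp).mp hdvd with h1 | hps
    · exact Subgroup.index_eq_one.mp h1
    · exfalso
      have hcs : Nat.card (A ⊔ B : Subgroup Q) = p ^ 4 := by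
        have h := Subgroup.card_mul_index (A ⊔ B)
        rw [hps, hcardQ] at h
        have h5 : p ^ 5 = p ^ 4 * p := by ring
        rw [h5] at h
        exact Nat.eq_of_mul_eq_mul_right hp.pos h
      have hAS : A = A ⊔ B :=
        aux_eq_of_le_of_card_le le_sup_left (by rw [hAcard, hcs])
      exact hnotle (le_trans le_sup_right hAS.symm.le)
  have hDindex : (A ⊓ B).index ≤ p ^ 2 := by
    have h := Subgroup.index_inf_le (H := A) (K := B)
    rw [hAindex, hBindex] at h
    calc (A ⊓ B).index ≤ p * p := h
      _ = p ^ 2 := (sq p).symm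
  have hDcard : p ^ 3 ≤ Nat.card (A ⊓ B : Subgroup Q) := by
    have h := Subgroup.card_mul_index (A ⊓ B)
    rw [hcardQ] at h
    have h1 : p ^ 5 ≤ Nat.card (A ⊓ B : Subgroup Q) * p ^ 2 := by
      calc p ^ 5 = Nat.card (A ⊓ B : Subgroup Q) * (A ⊓ B).index := h.symm
        _ ≤ Nat.card (A ⊓ B : Subgroup Q) * p ^ 2 :=
          Nat.mul_le_mul_left _ hDindex
    have h2 : p ^ 3 * p ^ 2 ≤ Nat.card (A ⊓ B : Subgroup Q) * p ^ 2 := by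
      calc p ^ 3 * p ^ 2 = p ^ 5 := by ring
        _ ≤ _ := h1
    exact Nat.le_of_mul_le_mul_right h2 (pow_pos hp.pos 2)
  have hDcent : A ⊓ B ≤ Subgroup.center Q := by
    intro d hd
    rw [Subgroup.mem_center_iff]
    intro g
    have hAc : A ≤ Subgroup.centralizer ((A ⊓ B : Subgroup Q) : Set Q) := by
      intro a ha
      rw [Subgroup.mem_centralizer_iff]
      intro h hh
      exact habA h ((inf_le_left : A ⊓ B ≤ A) hh) a ha
    have hBc : B ≤ Subgroup.centralizer ((A ⊓ B : Subgroup Q) : Set Q) := by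
      intro b hb
      rw [Subgroup.mem_centralizer_iff]
      intro h hh
      exact hBab h ((inf_le_right : A ⊓ B ≤ B) hh) b hb
    have hg : g ∈ Subgroup.centralizer ((A ⊓ B : Subgroup Q) : Set Q) :=
      (sup_le hAc hBc) (hStop ▸ Subgroup.mem_top g)
    exact (Subgroup.mem_centralizer_iff.mp hg d hd).symm
  have hfinal : Nat.card (A ⊓ B : Subgroup Q) ≤ p ^ 2 := by
    rw [← hZcard]
    exact Nat.le_of_dvd (by rw [hZcard]; positivity) (Subgroup.card_dvd_of_le hDcent)
  have hlt : p ^ 2 < p ^ 3 := Nat.pow_lt_pow_right hp.one_lt (by norm_num)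
  omega
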